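/- Let ν ∈ (−1,0) be a real number and let ℓ be a natural number. Let P_ℓ denote the Legendre polynomial of degree ℓ, given by the Rodrigues formula P_ℓ(t) = ((−1)^{ℓ}/(2^{ℓ}·ℓ!)) · ((d/dt)^{ℓ} (1−t²)^{ℓ})(t). Then 2π·∫_{−1}^{1} (2(1−t))^{ν/2}·P_ℓ(t) dt = 2^{ν+2}·π·(−ν/2)_{ℓ}·Γ((ν+2)/2) / Γ(ℓ+ν/2+2). -/

import Mathlib

open MeasureTheory Set Filter Polynomial intervalIntegral Topology

noncomputable section
namespace Stmt10Aux


def Q (ℓ : ℕ) : Polynomial ℝ := (1 - Polynomial.X ^ 2) ^ ℓ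

lemma iteratedDeriv_polyeval (p : Polynomial ℝ) (n : ℕ) :
    iteratedDeriv n (fun x : ℝ => p.eval x) =
      fun x => (Polynomial.derivative^[n] p).eval x := by
  induction n with
  | zero => simp
  | succ n ih =>
    funext x
    rw [iteratedDeriv_succ, ih, Function.iterate_succ_apply']
    exact Polynomial.deriv (p := Polynomial.derivative^[n] p)

lemma exists_factor (ℓ j : ℕ) (hj : j ≤ ℓ) :
    ∃ r : Polynomial ℝ,
      Polynomial.derivative^[j] (Q ℓ) = (1 - Polynomial.X ^ 2) ^ (ℓ - j) * r := by
  induction j with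
  | zero => exact ⟨1, by simp [Q]⟩
  | succ j ih =>
    obtain ⟨r, hr⟩ := ih (by omega)
    refine ⟨Polynomial.C ((ℓ - j : ℕ) : ℝ) * Polynomial.derivative (1 - Polynomial.X ^ 2) * r
        + (1 - Polynomial.X ^ 2) * Polynomial.derivative r, ?_⟩
    rw [Function.iterate_succ_apply', hr, Polynomial.derivative_mul, Polynomial.derivative_pow]
    rw [show ℓ - j - 1 = ℓ - (j + 1) from by omega,
      show ℓ - j = (ℓ - (j + 1)) + 1 from by omega]
    ring

lemma II_rpow_mul (a : ℝ) (ha : -1 < a) {g : ℝ → ℝ} (hg : Continuous g) :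
    IntervalIntegrable (fun t => (1 - t) ^ a * g t) volume (-1) 1 := by
  have h0 : IntervalIntegrable (fun x : ℝ => x ^ a) volume 0 2 :=
    intervalIntegral.intervalIntegrable_rpow' ha
  have h1 := h0.comp_sub_left 1
  norm_num at h1
  exact (h1.mul_continuousOn hg.continuousOn).symm

lemma hasDerivAt_one_sub_rpow (p : ℝ) {x : ℝ} (hx : x < 1) :
    HasDerivAt (fun t : ℝ => (1 - t) ^ p) (-(p * (1 - x) ^ (p - 1))) x := by
  have h1 : HasDerivAt (fun y : ℝ => y ^ p) (p * (1 - x) ^ (p - 1)) (1 - x) :=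
    Real.hasDerivAt_rpow_const (Or.inl (by linarith : (0:ℝ) < 1 - x).ne')
  have h2 : HasDerivAt (fun t : ℝ => 1 - t) (-1) x := (hasDerivAt_id x).const_sub 1
  have h3 := h1.comp x h2
  simp only [Function.comp_def] at h3
  rw [show -(p * (1 - x) ^ (p - 1)) = p * (1 - x) ^ (p - 1) * -1 from by ring]
  exact h3

lemma tendsto_one_sub_rpow_zero (p : ℝ) (hp : 0 < p) :
    Tendsto (fun t : ℝ => (1 - t) ^ p) (𝓝[<] (1 : ℝ)) (𝓝 0) := by
  have h1 : ContinuousAt (fun y : ℝ => y ^ p) 0 :=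
    Real.continuousAt_rpow_const 0 p (Or.inr hp.le)
  have h2 : Tendsto (fun t : ℝ => 1 - t) (𝓝[<] (1 : ℝ)) (𝓝 0) := by
    have h : Tendsto (fun t : ℝ => 1 - t) (𝓝 (1 : ℝ)) (𝓝 0) := by
      have := ((continuous_const (y := (1:ℝ))).sub continuous_id).tendsto (1 : ℝ)
      simpa [Pi.sub_def] using this
    exact h.mono_left nhdsWithin_le_nhds
  have h3 := h1.tendsto.comp h2
  simpa [Real.zero_rpow hp.ne', Function.comp_def] using h3

lemma split_pow {x : ℝ} (hx : x < 1) (c : ℝ) (j : ℕ) (s : ℝ) :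
    (1 - x) ^ (c - j) * ((1 - x ^ 2) ^ j * s) = (1 - x) ^ c * ((1 + x) ^ j * s) := by
  have h1 : (0 : ℝ) < 1 - x := by linarith
  have key : (1 - x) ^ (c - j) * (1 - x) ^ (j : ℕ) = (1 - x) ^ c := by
    rw [← Real.rpow_natCast (1 - x) j, ← Real.rpow_add h1]
    congr 1; ring
  rw [show (1 - x ^ 2) = (1 - x) * (1 + x) from by ring, mul_pow, ← key]
  ring




lemma hasDerivAt_aux (a : ℝ) (ha1 : (0:ℝ) < a + 1) {x : ℝ} (hx : x < 1) :
    HasDerivAt (fun t : ℝ => -((1 - t) ^ (a + 1)) / (a + 1)) ((1 - x) ^ a) x := by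
  have h := (hasDerivAt_one_sub_rpow (a + 1) hx).neg.div_const (a + 1)
  simp only [add_sub_cancel_right] at h
  have heq : (1 - x) ^ a = - -((a + 1) * (1 - x) ^ a) / (a + 1) := by
    field_simp
  rw [heq]
  exact h

lemma beta_base (a : ℝ) (ha : -1 < a) :
    ∫ t in (-1:ℝ)..1, (1 - t) ^ a = 2 ^ (a + 1) / (a + 1) := by
  have ha1 : (0:ℝ) < a + 1 := by linarith
  have hderiv : ∀ x ∈ Ioo (-1:ℝ) 1,
      HasDerivAt (fun t : ℝ => -((1 - t) ^ (a + 1)) / (a + 1)) ((1 - x) ^ a) x :=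
    fun x hx => hasDerivAt_aux a ha1 hx.2
  have hint : IntervalIntegrable (fun x : ℝ => (1 - x) ^ a) volume (-1) 1 := by
    simpa only [mul_one] using II_rpow_mul a ha (g := fun _ => (1:ℝ)) continuous_const
  have h1 : Tendsto (fun t : ℝ => -((1 - t) ^ (a + 1)) / (a + 1)) (𝓝[<] (1:ℝ)) (𝓝 0) := by
    have := ((tendsto_one_sub_rpow_zero (a + 1) ha1).neg).div_const (a + 1)
    simpa using this
  have h0 : Tendsto (fun t : ℝ => -((1 - t) ^ (a + 1)) / (a + 1)) (𝓝[>] (-1:ℝ))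
      (𝓝 (-(2 ^ (a+1)) / (a + 1))) := by
    have hc : ContinuousAt (fun t : ℝ => -((1 - t) ^ (a + 1)) / (a + 1)) (-1) := by
      have h2 : ContinuousAt (fun t : ℝ => (1 - t) ^ (a + 1)) (-1) :=
        (Real.continuousAt_rpow_const (1 - (-1)) (a + 1)
          (Or.inl (by norm_num))).comp ((continuous_const.sub continuous_id).continuousAt)
      exact (h2.neg).div_const (a + 1)
    have h3 := (hc.continuousWithinAt (s := Set.Ioi (-1:ℝ))).tendsto
    have hval : -((1 - (-1:ℝ)) ^ (a + 1)) / (a + 1) = -(2 ^ (a+1)) / (a + 1) := by norm_num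
    rwa [hval] at h3
  have key := intervalIntegral.integral_eq_sub_of_hasDerivAt_of_tendsto
    (by norm_num : (-1:ℝ) < 1) hderiv hint h0 h1
  rw [key]
  ring

lemma beta_step (n : ℕ) (a : ℝ) (ha : -1 < a) :
    ∫ t in (-1:ℝ)..1, (1 - t) ^ a * (1 + t) ^ (n + 1)
      = ((n : ℝ) + 1) / (a + 1) * ∫ t in (-1:ℝ)..1, (1 - t) ^ (a + 1) * (1 + t) ^ n := by
  have ha1 : (0:ℝ) < a + 1 := by linarith
  set F : ℝ → ℝ := fun t => (1 + t) ^ (n + 1) * (-((1 - t) ^ (a + 1)) / (a + 1)) with hF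
  set f' : ℝ → ℝ := fun x =>
    (1 - x) ^ (a + 1) * (((n : ℝ) + 1) * (1 + x) ^ n * (-(a + 1)⁻¹)) +
      (1 - x) ^ a * (1 + x) ^ (n + 1) with hf'
  have hderiv : ∀ x ∈ Ioo (-1:ℝ) 1, HasDerivAt F (f' x) x := by
    intro x hx
    have h1 : HasDerivAt (fun t : ℝ => (1 + t) ^ (n + 1))
        (((n : ℝ) + 1) * (1 + x) ^ n) x := by
      have := ((hasDerivAt_id x).const_add 1).pow (n + 1)
      simpa [Pi.pow_def] using this
    have h2 := hasDerivAt_aux a ha1 hx.2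
    have h3 := h1.mul h2
    have heq : f' x = ((n : ℝ) + 1) * (1 + x) ^ n * (-((1 - x) ^ (a + 1)) / (a + 1)) +
        (1 + x) ^ (n + 1) * (1 - x) ^ a := by
      simp only [hf']; ring
    rw [heq]
    exact h3
  have hi1 : IntervalIntegrable
      (fun x : ℝ => (1 - x) ^ (a + 1) * (((n : ℝ) + 1) * (1 + x) ^ n * (-(a + 1)⁻¹)))
      volume (-1) 1 := II_rpow_mul (a + 1) (by linarith) (by continuity)
  have hi2 : IntervalIntegrable (fun x : ℝ => (1 - x) ^ a * (1 + x) ^ (n + 1))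
      volume (-1) 1 := II_rpow_mul a ha (by continuity)
  have hint : IntervalIntegrable f' volume (-1) 1 := hi1.add hi2
  have h1lim : Tendsto F (𝓝[<] (1:ℝ)) (𝓝 0) := by
    have hA : Tendsto (fun t : ℝ => (1 + t) ^ (n + 1)) (𝓝[<] (1:ℝ)) (𝓝 ((1+1:ℝ) ^ (n+1))) :=
      ((Continuous.tendsto (by continuity) 1)).mono_left nhdsWithin_le_nhds
    have hB := ((tendsto_one_sub_rpow_zero (a + 1) ha1).neg).div_const (a + 1)
    have hB' : Tendsto (fun t : ℝ => -((1 - t) ^ (a + 1)) / (a + 1)) (𝓝[<] (1:ℝ)) (𝓝 0) := by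
      simpa using hB
    have := hA.mul hB'
    simpa [hF] using this
  have h0lim : Tendsto F (𝓝[>] (-1:ℝ)) (𝓝 0) := by
    have hc : ContinuousAt F (-1) := by
      have h2 : ContinuousAt (fun t : ℝ => (1 - t) ^ (a + 1)) (-1) :=
        (Real.continuousAt_rpow_const (1 - (-1)) (a + 1)
          (Or.inl (by norm_num))).comp ((continuous_const.sub continuous_id).continuousAt)
      exact (((continuous_pow (n+1)).comp (continuous_const.add continuous_id)).continuousAt).mul
        ((h2.neg).div_const (a + 1))
    have h3 := (hc.continuousWithinAt (s := Set.Ioi (-1:ℝ))).tendsto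
    have hval : F (-1) = 0 := by simp [hF]
    rwa [hval] at h3
  have key := intervalIntegral.integral_eq_sub_of_hasDerivAt_of_tendsto
    (by norm_num : (-1:ℝ) < 1) hderiv hint h0lim h1lim
  have hsplit : ∫ x in (-1:ℝ)..1, f' x
      = (∫ x in (-1:ℝ)..1, (1 - x) ^ (a + 1) * (((n : ℝ) + 1) * (1 + x) ^ n * (-(a + 1)⁻¹)))
        + ∫ x in (-1:ℝ)..1, (1 - x) ^ a * (1 + x) ^ (n + 1) := by
    rw [hf']
    exact intervalIntegral.integral_add hi1 hi2
  have hconst : (∫ x in (-1:ℝ)..1, (1 - x) ^ (a + 1) * (((n : ℝ) + 1) * (1 + x) ^ n * (-(a + 1)⁻¹)))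
      = (((n:ℝ)+1) * (-(a + 1)⁻¹)) * ∫ x in (-1:ℝ)..1, (1 - x) ^ (a + 1) * (1 + x) ^ n := by
    rw [← intervalIntegral.integral_const_mul]
    apply intervalIntegral.integral_congr
    intro x _
    ring
  rw [hsplit, hconst] at key
  linear_combination key

lemma beta_integral : ∀ (n : ℕ) (a : ℝ), -1 < a →
    ∫ t in (-1:ℝ)..1, (1 - t) ^ a * (1 + t) ^ n
      = 2 ^ (a + n + 1) * (n.factorial : ℝ) * Real.Gamma (a + 1) / Real.Gamma (a + (n : ℝ) + 2) := by
  intro n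
  induction n with
  | zero =>
    intro a ha
    have ha1 : (0:ℝ) < a + 1 := by linarith
    have hGpos : (0:ℝ) < Real.Gamma (a + 1) := Real.Gamma_pos_of_pos ha1
    simp only [pow_zero, mul_one, Nat.factorial_zero, Nat.cast_one, Nat.cast_zero, add_zero]
    rw [beta_base a ha,
      show a + 2 = (a + 1) + 1 from by ring,
      show Real.Gamma (a + 1 + 1) = (a + 1) * Real.Gamma (a + 1) from Real.Gamma_add_one ha1.ne']
    rw [mul_div_mul_right _ _ hGpos.ne']
  | succ n ih =>
    intro a ha
    have ha1 : (0:ℝ) < a + 1 := by linarith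
    have hGpos : (0:ℝ) < Real.Gamma (a + 1) := Real.Gamma_pos_of_pos ha1
    have hnn : (0:ℝ) ≤ (n:ℝ) := Nat.cast_nonneg n
    have hGd : (0:ℝ) < Real.Gamma (a + ((n:ℝ) + 1) + 2) :=
      Real.Gamma_pos_of_pos (by linarith)
    rw [beta_step n a ha, ih (a + 1) (by linarith)]
    rw [show Real.Gamma (a + 1 + 1) = (a + 1) * Real.Gamma (a + 1) from Real.Gamma_add_one ha1.ne']
    push_cast
    rw [show a + 1 + (n:ℝ) + 1 = a + ((n:ℝ) + 1) + 1 from by ring,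
      show a + 1 + (n:ℝ) + 2 = a + ((n:ℝ) + 1) + 2 from by ring,
      Nat.factorial_succ]
    push_cast
    field_simp


lemma ibp_step (σ : ℝ) (hσ1 : -1 < σ) (hσ0 : σ < 0) (ℓ k : ℕ) (hk : k < ℓ) :
    ∫ t in (-1:ℝ)..1, (1 - t) ^ (σ - (k:ℕ)) * (Polynomial.derivative^[ℓ - k] (Q ℓ)).eval t
      = (σ - (k:ℕ)) * ∫ t in (-1:ℝ)..1,
          (1 - t) ^ (σ - ((k+1:ℕ):ℝ)) * (Polynomial.derivative^[ℓ - (k + 1)] (Q ℓ)).eval t := by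
  set m := ℓ - (k + 1) with hm
  obtain ⟨r, hr⟩ := exists_factor ℓ m (by omega)
  rw [show ℓ - m = k + 1 from by omega] at hr
  rw [show ℓ - k = m + 1 from by omega]
  set r2 : Polynomial ℝ := Polynomial.C ((k + 1 : ℕ) : ℝ) *
      Polynomial.derivative (1 - Polynomial.X ^ 2) * r
      + (1 - Polynomial.X ^ 2) * Polynomial.derivative r with hr2def
  have hr2 : Polynomial.derivative^[m + 1] (Q ℓ) = (1 - Polynomial.X ^ 2) ^ k * r2 := by
    rw [Function.iterate_succ_apply', hr, Polynomial.derivative_mul, Polynomial.derivative_pow]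
    simp only [Nat.add_sub_cancel]
    rw [hr2def, pow_succ]
    push_cast
    ring
  have evm : ∀ t : ℝ, (Polynomial.derivative^[m] (Q ℓ)).eval t
      = (1 - t ^ 2) ^ (k + 1) * r.eval t := by
    intro t; rw [hr]; simp
  have evm1 : ∀ t : ℝ, (Polynomial.derivative^[m + 1] (Q ℓ)).eval t
      = (1 - t ^ 2) ^ k * r2.eval t := by
    intro t; rw [hr2]; simp
  have hg1 : Continuous (fun x : ℝ => (1 + x) ^ (k + 1) * r.eval x) :=
    ((continuous_const.add continuous_id).pow (k+1)).mul (Polynomial.continuous r)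
  have hg2 : Continuous (fun x : ℝ => (1 + x) ^ k * r2.eval x) :=
    ((continuous_const.add continuous_id).pow k).mul (Polynomial.continuous r2)
  have hσk : σ - (k:ℝ) ≠ 0 := by
    have := Nat.cast_nonneg (α := ℝ) k; intro h; nlinarith
  have hσk1 : σ - ((k+1:ℕ):ℝ) ≠ 0 := by
    have := Nat.cast_nonneg (α := ℝ) (k+1); intro h; nlinarith
  have E1 : ∀ x ∈ Icc (-1:ℝ) 1,
      (1 - x) ^ (σ - ((k+1:ℕ):ℝ)) * (Polynomial.derivative^[m] (Q ℓ)).eval x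
        = (1 - x) ^ σ * ((1 + x) ^ (k + 1) * r.eval x) := by
    intro x hx
    rw [evm]
    rcases eq_or_lt_of_le hx.2 with h | h
    · subst h
      rw [show (1:ℝ) - 1 = 0 from by norm_num, show (1:ℝ) - 1^2 = 0 from by norm_num,
        Real.zero_rpow hσk1, Real.zero_rpow hσ0.ne, zero_mul, zero_mul]
    · exact split_pow h σ (k+1) (r.eval x)
  have E2 : ∀ x ∈ Icc (-1:ℝ) 1,
      (1 - x) ^ (σ - (k:ℝ)) * (Polynomial.derivative^[m + 1] (Q ℓ)).eval x
        = (1 - x) ^ σ * ((1 + x) ^ k * r2.eval x) := by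
    intro x hx
    rw [evm1]
    rcases eq_or_lt_of_le hx.2 with h | h
    · subst h
      rw [show (1:ℝ) - 1 = 0 from by norm_num, show (1:ℝ) - 1^2 = 0 from by norm_num,
        Real.zero_rpow hσk, Real.zero_rpow hσ0.ne, zero_mul, zero_mul]
    · exact split_pow h σ k (r2.eval x)
  set F : ℝ → ℝ := fun t => (1 - t) ^ (σ - (k:ℝ)) * (Polynomial.derivative^[m] (Q ℓ)).eval t
    with hF
  set f' : ℝ → ℝ := fun x =>
    (-(σ - (k:ℝ))) * ((1 - x) ^ σ * ((1 + x) ^ (k + 1) * r.eval x)) +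
      (1 - x) ^ σ * ((1 + x) ^ k * r2.eval x) with hf'
  have hderiv : ∀ x ∈ Ioo (-1:ℝ) 1, HasDerivAt F (f' x) x := by
    intro x hx
    have hA := hasDerivAt_one_sub_rpow (σ - (k:ℝ)) hx.2
    have hB := Polynomial.hasDerivAt (Polynomial.derivative^[m] (Q ℓ)) x
    rw [show Polynomial.derivative (Polynomial.derivative^[m] (Q ℓ))
        = Polynomial.derivative^[m+1] (Q ℓ) from (Function.iterate_succ_apply' _ _ _).symm] at hB
    have hAB := hA.mul hB
    have e1 : (1 - x) ^ (σ - (k:ℝ) - 1) * (Polynomial.derivative^[m] (Q ℓ)).eval x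
        = (1 - x) ^ σ * ((1 + x) ^ (k + 1) * r.eval x) := by
      rw [show σ - (k:ℝ) - 1 = σ - ((k+1:ℕ):ℝ) from by push_cast; ring]
      exact E1 x (Ioo_subset_Icc_self hx)
    have e2 : (1 - x) ^ (σ - (k:ℝ)) * (Polynomial.derivative^[m+1] (Q ℓ)).eval x
        = (1 - x) ^ σ * ((1 + x) ^ k * r2.eval x) := E2 x (Ioo_subset_Icc_self hx)
    have hval : f' x = -((σ - (k:ℝ)) * (1 - x) ^ (σ - (k:ℝ) - 1)) *
        (Polynomial.derivative^[m] (Q ℓ)).eval x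
        + (1 - x) ^ (σ - (k:ℝ)) * (Polynomial.derivative^[m+1] (Q ℓ)).eval x := by
      rw [hf']
      linear_combination (σ - (k:ℝ)) * e1 - e2
    rw [hval]
    exact hAB
  have hi1 : IntervalIntegrable
      (fun x : ℝ => (-(σ - (k:ℝ))) * ((1 - x) ^ σ * ((1 + x) ^ (k + 1) * r.eval x)))
      volume (-1) 1 := (II_rpow_mul σ hσ1 hg1).const_mul _
  have hi2 : IntervalIntegrable
      (fun x : ℝ => (1 - x) ^ σ * ((1 + x) ^ k * r2.eval x)) volume (-1) 1 :=
    II_rpow_mul σ hσ1 hg2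
  have hint : IntervalIntegrable f' volume (-1) 1 := hi1.add hi2
  have h0lim : Tendsto F (𝓝[>] (-1:ℝ)) (𝓝 0) := by
    have hc : ContinuousAt F (-1) := by
      have h2 : ContinuousAt (fun t : ℝ => (1 - t) ^ (σ - (k:ℝ))) (-1) :=
        (Real.continuousAt_rpow_const (1 - (-1)) (σ - (k:ℝ))
          (Or.inl (by norm_num))).comp ((continuous_const.sub continuous_id).continuousAt)
      exact h2.mul (Polynomial.continuous _).continuousAt
    have h3 := (hc.continuousWithinAt (s := Set.Ioi (-1:ℝ))).tendsto
    have hval : F (-1) = 0 := by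
      rw [hF]
      simp only [evm]
      norm_num
    rwa [hval] at h3
  have h1lim : Tendsto F (𝓝[<] (1:ℝ)) (𝓝 0) := by
    have hG : Tendsto (fun x : ℝ => (1 - x) ^ (σ + 1) * ((1 + x) ^ (k + 1) * r.eval x))
        (𝓝[<] (1:ℝ)) (𝓝 0) := by
      have := (tendsto_one_sub_rpow_zero (σ + 1) (by linarith)).mul
        ((hg1.tendsto 1).mono_left nhdsWithin_le_nhds)
      simpa using this
    apply hG.congr'
    filter_upwards [Ioo_mem_nhdsLT_of_mem (show (1:ℝ) ∈ Ioc (-1:ℝ) 1 by norm_num)] with x hx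
    rw [hF]
    simp only
    rw [evm, show σ - (k:ℝ) = (σ + 1) - ((k+1:ℕ):ℝ) from by push_cast; ring]
    exact (split_pow hx.2 (σ+1) (k+1) (r.eval x)).symm
  have key := intervalIntegral.integral_eq_sub_of_hasDerivAt_of_tendsto
    (by norm_num : (-1:ℝ) < 1) hderiv hint h0lim h1lim
  have hsplit : ∫ x in (-1:ℝ)..1, f' x
      = (-(σ - (k:ℝ))) * (∫ x in (-1:ℝ)..1, (1 - x) ^ σ * ((1 + x) ^ (k + 1) * r.eval x))
        + ∫ x in (-1:ℝ)..1, (1 - x) ^ σ * ((1 + x) ^ k * r2.eval x) := by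
    rw [hf']
    rw [intervalIntegral.integral_add hi1 hi2, intervalIntegral.integral_const_mul]
  rw [hsplit] at key
  have hL : ∫ t in (-1:ℝ)..1, (1 - t) ^ (σ - (k:ℝ)) * (Polynomial.derivative^[m+1] (Q ℓ)).eval t
      = ∫ x in (-1:ℝ)..1, (1 - x) ^ σ * ((1 + x) ^ k * r2.eval x) := by
    apply intervalIntegral.integral_congr
    intro x hx
    exact E2 x (by rwa [Set.uIcc_of_le (by norm_num : (-1:ℝ) ≤ 1)] at hx)
  have hR : ∫ t in (-1:ℝ)..1, (1 - t) ^ (σ - ((k+1:ℕ):ℝ)) *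
        (Polynomial.derivative^[m] (Q ℓ)).eval t
      = ∫ x in (-1:ℝ)..1, (1 - x) ^ σ * ((1 + x) ^ (k + 1) * r.eval x) := by
    apply intervalIntegral.integral_congr
    intro x hx
    exact E1 x (by rwa [Set.uIcc_of_le (by norm_num : (-1:ℝ) ≤ 1)] at hx)
  rw [hL, hR]
  linear_combination key

lemma chain (σ : ℝ) (hσ1 : -1 < σ) (hσ0 : σ < 0) (ℓ : ℕ) :
    ∀ k, k ≤ ℓ →
      ∫ t in (-1:ℝ)..1, (1 - t) ^ σ * (Polynomial.derivative^[ℓ] (Q ℓ)).eval t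
        = (∏ i ∈ Finset.range k, (σ - (i:ℝ))) *
          ∫ t in (-1:ℝ)..1, (1 - t) ^ (σ - (k:ℝ)) *
            (Polynomial.derivative^[ℓ - k] (Q ℓ)).eval t := by
  intro k
  induction k with
  | zero => intro _; simp
  | succ k ih =>
    intro hk
    rw [ih (by omega), ibp_step σ hσ1 hσ0 ℓ k (by omega), Finset.prod_range_succ]
    push_cast
    ring

lemma Gamma_prod (x : ℝ) (hx : 0 < x) : ∀ n : ℕ,
    Real.Gamma (x + n) = (∏ i ∈ Finset.range n, (x + i)) * Real.Gamma x := by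
  intro n
  induction n with
  | zero => simp
  | succ n ih =>
    have hpos : (0:ℝ) < x + n := by
      have := Nat.cast_nonneg (α := ℝ) n; linarith
    rw [show x + ((n+1:ℕ):ℝ) = (x + n) + 1 from by push_cast; ring,
      Real.Gamma_add_one hpos.ne', ih, Finset.prod_range_succ]
    ring



lemma final_arith_sigma (σ : ℝ) (hσ1 : -1 < σ) (hσ0 : σ < 0) (ℓ : ℕ) :
    2 * Real.pi * ((2:ℝ)^σ * ((-1:ℝ)^ℓ/(2^ℓ * (ℓ.factorial:ℝ))) *
      (((-1:ℝ)^ℓ * (Real.Gamma (-σ+ℓ)/Real.Gamma (-σ))) *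
        ((2:ℝ)^(σ+ℓ+1) * (ℓ.factorial:ℝ) * Real.Gamma (σ+1) / Real.Gamma (σ+ℓ+2))))
    = 2^(σ+σ+2) * Real.pi * (Real.Gamma (-σ+ℓ)/Real.Gamma (-σ)) *
        Real.Gamma (σ+1) / Real.Gamma (σ+ℓ+2) := by
  have hF : ((ℓ.factorial : ℕ) : ℝ) ≠ 0 := Nat.cast_ne_zero.mpr (Nat.factorial_ne_zero ℓ)
  have hΓb : Real.Gamma (-σ) ≠ 0 := (Real.Gamma_pos_of_pos (by linarith)).ne'
  have hcast : (0:ℝ) ≤ (ℓ:ℝ) := Nat.cast_nonneg ℓ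
  have hΓd : Real.Gamma (σ + ℓ + 2) ≠ 0 := (Real.Gamma_pos_of_pos (by linarith)).ne'
  have two_pos : (0:ℝ) < 2 := by norm_num
  have e : ∀ p q : ℝ, (2:ℝ)^p * 2^q = 2^(p+q) := fun p q => (Real.rpow_add two_pos p q).symm
  have hneg2 : (-1:ℝ)^(ℓ*2) = 1 := by
    rw [mul_comm, pow_mul]; norm_num
  have key3 : (2:ℝ)^(σ+(ℓ:ℝ)+1) = 2^(σ+σ+2) * 2^(ℓ:ℝ) / (2 * 2^σ) := by
    rw [eq_div_iff (by positivity)]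
    rw [show (2:ℝ) * 2^σ = 2^(1:ℝ) * 2^σ from by norm_num, e, e, e]
    congr 1
    ring
  rw [← Real.rpow_natCast (2:ℝ) ℓ, key3]
  field_simp
  linear_combination
    (Real.Gamma (-σ+(ℓ:ℝ)) * Real.Gamma (σ+1))
      * hneg2

lemma final_arith (ν : ℝ) (hν1 : -1 < ν) (hν0 : ν < 0) (ℓ : ℕ) :
    2 * Real.pi * ((2:ℝ)^(ν/2) * ((-1:ℝ)^ℓ/(2^ℓ * (ℓ.factorial:ℝ))) *
      (((-1:ℝ)^ℓ * (Real.Gamma (-(ν/2)+ℓ)/Real.Gamma (-(ν/2)))) *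
        ((2:ℝ)^(ν/2+ℓ+1) * (ℓ.factorial:ℝ) * Real.Gamma (ν/2+1) / Real.Gamma (ν/2+ℓ+2))))
    = 2 ^ (ν + 2) * Real.pi * (Real.Gamma (-ν / 2 + ℓ) / Real.Gamma (-ν / 2)) *
        Real.Gamma ((ν + 2) / 2) / Real.Gamma ((ℓ : ℝ) + ν / 2 + 2) := by
  have h2 : (ν + 2)/2 = ν/2 + 1 := by ring
  have h3 : (ℓ:ℝ) + ν/2 + 2 = ν/2 + ℓ + 2 := by ring
  have h1 : -ν / 2 = -(ν/2) := by ring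
  have h4 : ν + 2 = ν/2 + ν/2 + 2 := by ring
  rw [h2, h3, h1, h4]
  exact final_arith_sigma (ν/2) (by linarith) (by linarith) ℓ

end Stmt10Aux
end


theorem stmt_10 (ν : ℝ) (hν : ν ∈ Set.Ioo (-1 : ℝ) 0) (ℓ : ℕ)
    (P : ℝ → ℝ)
    (hP : ∀ t : ℝ, P t =
      (-1 : ℝ) ^ ℓ / (2 ^ ℓ * (Nat.factorial ℓ)) *
        iteratedDeriv ℓ (fun s : ℝ => (1 - s ^ 2) ^ ℓ) t) :
    2 * Real.pi * ∫ t in Set.Ioo (-1 : ℝ) 1, (2 * (1 - t)) ^ (ν / 2) * P t =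
      2 ^ (ν + 2) * Real.pi * (Real.Gamma (-ν / 2 + ℓ) / Real.Gamma (-ν / 2)) *
        Real.Gamma ((ν + 2) / 2) / Real.Gamma ((ℓ : ℝ) + ν / 2 + 2) := by
  obtain ⟨hν1, hν0⟩ := hν
  set σ : ℝ := ν / 2 with hσdef
  have hσ1 : -1 < σ := by rw [hσdef]; linarith
  have hσ0 : σ < 0 := by rw [hσdef]; linarith
  have hσℓ : σ - (ℓ:ℝ) ≠ 0 := by
    have := Nat.cast_nonneg (α := ℝ) ℓ; intro h; nlinarith
  -- rewrite the function inside the iterated derivative as a polynomial evaluation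
  have hQev : (fun s : ℝ => (1 - s ^ 2) ^ ℓ) = fun s => (Stmt10Aux.Q ℓ).eval s := by
    funext s; simp [Stmt10Aux.Q]
  set c : ℝ := (2:ℝ) ^ σ * ((-1 : ℝ) ^ ℓ / (2 ^ ℓ * (Nat.factorial ℓ : ℝ))) with hc
  -- Step 1: rewrite the set integral
  have hstep1 : ∫ t in Set.Ioo (-1 : ℝ) 1, (2 * (1 - t)) ^ (ν / 2) * P t
      = c * ∫ t in Set.Ioo (-1 : ℝ) 1,
          (1 - t) ^ σ * (Polynomial.derivative^[ℓ] (Stmt10Aux.Q ℓ)).eval t := by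
    rw [← MeasureTheory.integral_const_mul]
    apply MeasureTheory.setIntegral_congr_fun measurableSet_Ioo
    intro t ht
    dsimp only
    rw [hP t, hQev, Stmt10Aux.iteratedDeriv_polyeval]
    rw [← hσdef, Real.mul_rpow (by norm_num) (by linarith [ht.2] : (0:ℝ) ≤ 1 - t)]
    rw [hc]
    ring
  -- Step 2: set integral to interval integral
  have hstep2 : ∫ t in Set.Ioo (-1 : ℝ) 1,
        (1 - t) ^ σ * (Polynomial.derivative^[ℓ] (Stmt10Aux.Q ℓ)).eval t
      = ∫ t in (-1:ℝ)..1, (1 - t) ^ σ * (Polynomial.derivative^[ℓ] (Stmt10Aux.Q ℓ)).eval t := by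
    rw [intervalIntegral.integral_of_le (by norm_num : (-1:ℝ) ≤ 1),
      MeasureTheory.integral_Ioc_eq_integral_Ioo]
  -- Step 3: the chain of integrations by parts
  have hstep3 := Stmt10Aux.chain σ hσ1 hσ0 ℓ ℓ le_rfl
  rw [Nat.sub_self] at hstep3
  simp only [Function.iterate_zero_apply] at hstep3
  -- Step 4: convert remaining integral to beta form
  have hstep4 : ∫ t in (-1:ℝ)..1, (1 - t) ^ (σ - (ℓ:ℝ)) * (Stmt10Aux.Q ℓ).eval t
      = ∫ t in (-1:ℝ)..1, (1 - t) ^ σ * ((1 + t) ^ ℓ * 1) := by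
    apply intervalIntegral.integral_congr
    intro x hx
    rw [Set.uIcc_of_le (by norm_num : (-1:ℝ) ≤ 1)] at hx
    dsimp only
    have hev : (Stmt10Aux.Q ℓ).eval x = (1 - x ^ 2) ^ ℓ * 1 := by simp [Stmt10Aux.Q]
    rw [hev]
    rcases eq_or_lt_of_le hx.2 with h | h
    · subst h
      rw [show (1:ℝ) - 1 = 0 from by norm_num, show (1:ℝ) - 1^2 = 0 from by norm_num,
        Real.zero_rpow hσℓ, Real.zero_rpow hσ0.ne, zero_mul, zero_mul]
    · exact Stmt10Aux.split_pow h σ ℓ 1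
  -- Step 5: beta integral value
  have hstep5 := Stmt10Aux.beta_integral ℓ σ hσ1
  -- Gamma / product facts
  have hmσ : (0:ℝ) < -σ := by linarith
  have hprod : (∏ i ∈ Finset.range ℓ, (σ - (i:ℝ)))
      = (-1:ℝ)^ℓ * (Real.Gamma (-σ + ℓ) / Real.Gamma (-σ)) := by
    have hG := Stmt10Aux.Gamma_prod (-σ) hmσ ℓ
    have hGne : Real.Gamma (-σ) ≠ 0 := (Real.Gamma_pos_of_pos hmσ).ne'
    have h1 : (∏ i ∈ Finset.range ℓ, (σ - (i:ℝ)))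
        = (-1:ℝ)^ℓ * ∏ i ∈ Finset.range ℓ, (-σ + (i:ℝ)) := by
      calc (∏ i ∈ Finset.range ℓ, (σ - (i:ℝ)))
          = ∏ i ∈ Finset.range ℓ, ((-1) * (-σ + (i:ℝ))) :=
            Finset.prod_congr rfl (fun i _ => by ring)
        _ = (-1:ℝ)^ℓ * ∏ i ∈ Finset.range ℓ, (-σ + (i:ℝ)) := by
            rw [Finset.prod_mul_distrib, Finset.prod_const, Finset.card_range]
    rw [h1]
    congr 1
    rw [hG, mul_div_cancel_right₀ _ hGne]
  have h45 : ∫ t in (-1:ℝ)..1, (1 - t) ^ (σ - (ℓ:ℝ)) * (Stmt10Aux.Q ℓ).eval t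
      = 2 ^ (σ + (ℓ:ℝ) + 1) * (Nat.factorial ℓ : ℝ) * Real.Gamma (σ + 1) /
          Real.Gamma (σ + (ℓ:ℝ) + 2) := by
    rw [hstep4, ← hstep5]
    apply intervalIntegral.integral_congr
    intro x _
    dsimp only
    ring
  rw [hstep1, hstep2, hstep3, h45, hprod, hc]
  exact Stmt10Aux.final_arith ν hν1 hν0 ℓ
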